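/- Let β : ℤ → ℂ be finitely supported and h : (0,∞) → ℂ measurable with ∫₀^∞ |h(ρ)| (ρ + ρ²) dρ < ∞. Let ψ be the unitary inverse Fourier transform of the divergence free wavelet ψ̂(ξ) = −i (Σ_m β_m e^{i m θ_ξ}) h(|ξ|) e_θ(ξ), with e_θ(ξ) = (ξ₂, −ξ₁)/|ξ|. Then ψ is continuously differentiable and its vorticity (scalar curl) has the closed frequency-domain form ∂ψ₂/∂x₁ (x) − ∂ψ₁/∂x₂ (x) = −(2π)^{−1} ∫_{ℝ²} |ξ| (Σ_m β_m e^{i m θ_ξ}) h(|ξ|) e^{i⟨ξ,x⟩} dξ for all x ∈ ℝ². -/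

import Mathlib

open MeasureTheory RealInnerProductSpace Set Metric

/-- The angular unit vector `e_θ(ξ) = (ξ₂, -ξ₁)/|ξ|`, viewed as a complex vector. -/
noncomputable def eThetaC (ξ : EuclideanSpace ℝ (Fin 2)) : Fin 2 → ℂ :=
  ![((ξ 1 / ‖ξ‖ : ℝ) : ℂ), ((-ξ 0 / ‖ξ‖ : ℝ) : ℂ)]

/-- The polar angle of a point in the plane. -/
noncomputable def polarAngle (v : EuclideanSpace ℝ (Fin 2)) : ℝ :=
  Complex.arg ((v 0 : ℂ) + (v 1 : ℂ) * Complex.I)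

lemma aux_lintegral_norm (g : ℝ → ENNReal) (hg : Measurable g) :
    ∫⁻ x : EuclideanSpace ℝ (Fin 2), g ‖x‖ =
      (volume : Measure (EuclideanSpace ℝ (Fin 2))).toSphere univ *
      ∫⁻ r in Ioi (0 : ℝ), ENNReal.ofReal r * g r := by
  set E2 := EuclideanSpace ℝ (Fin 2)
  have hdim : Module.finrank ℝ E2 = 2 := by simp [E2]
  have hm2 : Measurable fun p : sphere (0:E2) 1 × Ioi (0:ℝ) => g p.2.1 :=
    hg.comp (measurable_subtype_coe.comp measurable_snd)
  calc
    ∫⁻ x : E2, g ‖x‖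
        = ∫⁻ x : ({0}ᶜ : Set E2), g ‖x.1‖ ∂(Measure.comap Subtype.val volume) := by
      rw [lintegral_subtype_comap (measurableSet_singleton (0:E2)).compl (fun x => g ‖x‖),
        MeasureTheory.restrict_compl_singleton]
    _ = ∫⁻ x : ({0}ᶜ : Set E2), g ((homeomorphUnitSphereProd E2) x).2.1
          ∂(Measure.comap Subtype.val volume) :=
      lintegral_congr fun x => by simp
    _ = ∫⁻ p : sphere (0:E2) 1 × Ioi (0:ℝ), g p.2.1
          ∂((volume : Measure E2).toSphere.prod (.volumeIoiPow (Module.finrank ℝ E2 - 1))) :=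
      (volume : Measure E2).measurePreserving_homeomorphUnitSphereProd.lintegral_comp
        hm2
    _ = (volume : Measure E2).toSphere univ *
          ∫⁻ r : Ioi (0:ℝ), g r.1 ∂(Measure.volumeIoiPow (Module.finrank ℝ E2 - 1)) := by
      rw [MeasureTheory.lintegral_prod _ hm2.aemeasurable]
      simp [lintegral_const, mul_comm]
    _ = _ := by
      rw [hdim]
      congr 1
      rw [Measure.volumeIoiPow, lintegral_withDensity_eq_lintegral_mul _
        ((measurable_subtype_coe.pow_const _).ennreal_ofReal) (show Measurable fun r : Ioi (0:ℝ) => g r.1 from hg.comp measurable_subtype_coe)]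
      rw [← lintegral_subtype_comap (μ := volume) (measurableSet_Ioi (a := (0:ℝ)))
        (fun r => ENNReal.ofReal r * g r)]
      exact lintegral_congr fun r => by simp [pow_one]

lemma aux_integrable_norm (f : ℝ → ℝ) (hf : Measurable f) (h0 : ∀ r, 0 ≤ f r)
    (hfi : IntegrableOn (fun r => r * f r) (Set.Ioi 0)) :
    Integrable (fun x : EuclideanSpace ℝ (Fin 2) => f ‖x‖) := by
  refine ⟨(hf.comp measurable_norm).aestronglyMeasurable, ?_⟩
  rw [hasFiniteIntegral_iff_ofReal (Filter.Eventually.of_forall fun x => h0 _)]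
  rw [aux_lintegral_norm _ hf.ennreal_ofReal]
  apply ENNReal.mul_lt_top (measure_lt_top _ _)
  have h2 := hfi.2
  rw [hasFiniteIntegral_iff_ofReal ?_] at h2
  · refine lt_of_le_of_lt (le_of_eq ?_) h2
    refine setLIntegral_congr_fun measurableSet_Ioi (fun r hr => ?_)
    rw [← ENNReal.ofReal_mul (le_of_lt hr)]
  · filter_upwards [self_mem_ae_restrict measurableSet_Ioi] with r hr
    exact mul_nonneg (le_of_lt hr) (h0 r)

local notation "E2" => EuclideanSpace ℝ (Fin 2)

lemma aux_key (c : EuclideanSpace ℝ (Fin 2) → ℂ) (hc : AEStronglyMeasurable c volume)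
    (hc1 : Integrable c) (hc2 : Integrable fun ξ : EuclideanSpace ℝ (Fin 2) => ‖ξ‖ * ‖c ξ‖) :
    ContDiff ℝ 1 (fun x : EuclideanSpace ℝ (Fin 2) =>
      ∫ ξ : EuclideanSpace ℝ (Fin 2), Complex.exp (Complex.I * ((⟪ξ, x⟫ : ℝ) : ℂ)) * c ξ) ∧
    ∀ (x v : EuclideanSpace ℝ (Fin 2)),
      fderiv ℝ (fun x : EuclideanSpace ℝ (Fin 2) =>
        ∫ ξ : EuclideanSpace ℝ (Fin 2), Complex.exp (Complex.I * ((⟪ξ, x⟫ : ℝ) : ℂ)) * c ξ) x v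
        = ∫ ξ : EuclideanSpace ℝ (Fin 2),
            Complex.I * ((⟪ξ, v⟫ : ℝ) : ℂ) * Complex.exp (Complex.I * ((⟪ξ, x⟫ : ℝ) : ℂ)) * c ξ := by
  set B : E2 → (E2 →L[ℝ] ℂ) := fun ξ => Complex.ofRealCLM.comp (innerSL ℝ ξ) with hBdef
  set F : E2 → E2 → ℂ := fun x ξ => Complex.exp (Complex.I * ((⟪ξ, x⟫ : ℝ) : ℂ)) * c ξ with hFdef
  set F' : E2 → E2 → (E2 →L[ℝ] ℂ) := fun x ξ =>
    (Complex.I * Complex.exp (Complex.I * ((⟪ξ, x⟫ : ℝ) : ℂ)) * c ξ) • B ξ with hF'def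
  have hexp : ∀ t : ℝ, ‖Complex.exp (Complex.I * (t : ℂ))‖ = 1 := fun t => by
    rw [mul_comm]; exact Complex.norm_exp_ofReal_mul_I t
  have hexpcont : ∀ x : E2, Continuous fun ξ : E2 =>
      Complex.exp (Complex.I * ((⟪ξ, x⟫ : ℝ) : ℂ)) := fun x =>
    Complex.continuous_exp.comp (continuous_const.mul
      (Complex.continuous_ofReal.comp (continuous_id.inner continuous_const)))
  have hexpcont' : ∀ ξ : E2, Continuous fun x : E2 =>
      Complex.exp (Complex.I * ((⟪ξ, x⟫ : ℝ) : ℂ)) := fun ξ =>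
    Complex.continuous_exp.comp (continuous_const.mul
      (Complex.continuous_ofReal.comp (continuous_const.inner continuous_id)))
  have hFmeas : ∀ x : E2, AEStronglyMeasurable (F x) volume := fun x =>
    ((hexpcont x).aestronglyMeasurable).mul hc
  have hFint : ∀ x : E2, Integrable (F x) :=
    fun x => hc1.bdd_mul ((hexpcont x).aestronglyMeasurable) (c := 1) (Filter.Eventually.of_forall fun ξ => le_of_eq (hexp _))
  have hB : ∀ ξ : E2, ‖B ξ‖ ≤ ‖ξ‖ := fun ξ => by
    refine ContinuousLinearMap.opNorm_le_bound _ (norm_nonneg ξ) fun v => ?_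
    have : ‖(B ξ) v‖ = |⟪ξ, v⟫| := by
      rw [hBdef]
      simp only [ContinuousLinearMap.coe_comp', Function.comp_apply, innerSL_apply_apply,
        Complex.ofRealCLM_apply, Complex.norm_real, Real.norm_eq_abs]
    rw [this]
    exact abs_real_inner_le_norm ξ v
  have hBcont : Continuous B := by
    exact (ContinuousLinearMap.compL ℝ E2 ℝ ℂ Complex.ofRealCLM).continuous.comp
      (innerSL ℝ).continuous
  have hF'bd : ∀ (x ξ : E2), ‖F' x ξ‖ ≤ ‖ξ‖ * ‖c ξ‖ := fun x ξ => by
    have hrfl : F' x ξ = (Complex.I * Complex.exp (Complex.I * ((⟪ξ, x⟫ : ℝ) : ℂ)) * c ξ) • B ξ := rfl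
    rw [hrfl]
    refine le_trans (ContinuousLinearMap.opNorm_smul_le _ _) ?_
    have h1 : ‖Complex.I * Complex.exp (Complex.I * ((⟪ξ, x⟫ : ℝ) : ℂ)) * c ξ‖ = ‖c ξ‖ := by
      rw [norm_mul, norm_mul, Complex.norm_I, hexp]; ring
    rw [h1, mul_comm]
    exact mul_le_mul_of_nonneg_right (hB ξ) (norm_nonneg _)
  have hF'meas : ∀ x : E2, AEStronglyMeasurable (F' x) volume := fun x => by
    refine AEStronglyMeasurable.smul (f := fun ξ => Complex.I * Complex.exp (Complex.I * ((⟪ξ, x⟫ : ℝ) : ℂ)) * c ξ) (g := B) ?_ ?_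
    · exact (continuous_const.mul (hexpcont x)).aestronglyMeasurable.mul hc
    · exact hBcont.aestronglyMeasurable
  have hF'int : ∀ x : E2, Integrable (F' x) := fun x =>
    hc2.mono (hF'meas x) (Filter.Eventually.of_forall fun ξ => by
      simpa [abs_of_nonneg (mul_nonneg (norm_nonneg _) (norm_nonneg _))] using hF'bd x ξ)
  have hder : ∀ (x ξ : E2), HasFDerivAt (fun y => F y ξ) (F' x ξ) x := fun x ξ => by
    have h1 : HasFDerivAt (fun y : E2 => (⟪ξ, y⟫ : ℝ)) (innerSL ℝ ξ) x :=
      (innerSL ℝ ξ).hasFDerivAt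
    have h2 : HasFDerivAt (fun y : E2 => ((⟪ξ, y⟫ : ℝ) : ℂ)) (B ξ) x :=
      Complex.ofRealCLM.hasFDerivAt.comp x h1
    have h3 := h2.const_mul Complex.I
    have h4 := h3.cexp
    have h5 := h4.mul_const (c ξ)
    have heq : c ξ • (Complex.exp (Complex.I * ((⟪ξ, x⟫ : ℝ) : ℂ)) • (Complex.I • B ξ))
        = F' x ξ := by
      rw [hF'def]
      simp only [smul_smul]
      congr 1
      ring
    rw [← heq]
    exact h5
  have hmain : ∀ x : E2, HasFDerivAt (fun y => ∫ ξ : E2, F y ξ) (∫ ξ : E2, F' x ξ) x := by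
    intro x
    apply hasFDerivAt_integral_of_dominated_of_fderiv_le (s := ball x 1)
      (bound := fun ξ : E2 => ‖ξ‖ * ‖c ξ‖) (ball_mem_nhds x one_pos)
    · exact Filter.Eventually.of_forall fun y => hFmeas y
    · exact hFint x
    · exact hF'meas x
    · exact Filter.Eventually.of_forall fun ξ => fun y _ => hF'bd y ξ
    · exact hc2
    · exact Filter.Eventually.of_forall fun ξ => fun y _ => hder y ξ
  have hfderiv : ∀ x : E2, fderiv ℝ (fun y => ∫ ξ : E2, F y ξ) x = ∫ ξ : E2, F' x ξ :=
    fun x => (hmain x).fderiv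
  constructor
  · rw [contDiff_one_iff_fderiv]
    refine ⟨fun x => (hmain x).differentiableAt, ?_⟩
    rw [funext hfderiv]
    apply continuous_of_dominated hF'meas
      (fun x => Filter.Eventually.of_forall fun ξ => hF'bd x ξ) hc2
    exact Filter.Eventually.of_forall fun ξ => by
      refine Continuous.smul (f := fun x => Complex.I * Complex.exp (Complex.I * ((⟪ξ, x⟫ : ℝ) : ℂ)) * c ξ) (g := fun _ => B ξ) ?_ continuous_const
      exact continuous_const.mul (hexpcont' ξ) |>.mul continuous_const
  · intro x v
    rw [hfderiv x, ContinuousLinearMap.integral_apply (hF'int x) v]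
    refine integral_congr_ae (Filter.Eventually.of_forall fun ξ => ?_)
    rw [hF'def]
    simp only [ContinuousLinearMap.smul_apply, hBdef, ContinuousLinearMap.coe_comp',
      Function.comp_apply, innerSL_apply_apply, Complex.ofRealCLM_apply, smul_eq_mul]
    ring

set_option maxHeartbeats 1000000 in
/-- The spatial divergence free wavelet `ψ`, the inverse Fourier transform of
`ψ̂(ξ) = -i (∑_m β_m e^{imθ_ξ}) h(|ξ|) e_θ(ξ)`, is continuously differentiable and its
vorticity `∂ψ₂/∂x₁ - ∂ψ₁/∂x₂` has the closed frequency-domain form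
`-(2π)⁻¹ ∫ |ξ| (∑_m β_m e^{imθ_ξ}) h(|ξ|) e^{i⟨ξ,x⟩} dξ`. -/
theorem stmt_16 (β : ℤ →₀ ℂ) (h : ℝ → ℂ) (hmeas : Measurable h)
    (hint : IntegrableOn (fun ρ : ℝ => ‖h ρ‖ * (ρ + ρ ^ 2)) (Set.Ioi (0 : ℝ)))
    (ψ : EuclideanSpace ℝ (Fin 2) → Fin 2 → ℂ)
    (hψ : ∀ x, ψ x = (2 * Real.pi)⁻¹ • ∫ ξ : EuclideanSpace ℝ (Fin 2),
      Complex.exp (Complex.I * ((⟪ξ, x⟫ : ℝ) : ℂ)) •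
        (((-Complex.I) *
            (∑ m ∈ β.support, β m * Complex.exp (Complex.I * (m : ℂ) * ((polarAngle ξ : ℝ) : ℂ))) *
            h ‖ξ‖) • eThetaC ξ)) :
    (ContDiff ℝ 1 fun x => ψ x 0) ∧ (ContDiff ℝ 1 fun x => ψ x 1) ∧
      ∀ x : EuclideanSpace ℝ (Fin 2),
        fderiv ℝ (fun y => ψ y 1) x (EuclideanSpace.single 0 1) -
            fderiv ℝ (fun y => ψ y 0) x (EuclideanSpace.single 1 1)
          = -((2 * Real.pi)⁻¹ • ∫ ξ : EuclideanSpace ℝ (Fin 2),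
              ((‖ξ‖ : ℝ) : ℂ) *
                (∑ m ∈ β.support, β m * Complex.exp (Complex.I * (m : ℂ) * ((polarAngle ξ : ℝ) : ℂ))) *
                h ‖ξ‖ * Complex.exp (Complex.I * ((⟪ξ, x⟫ : ℝ) : ℂ))) := by
  classical
  set S : E2 → ℂ := fun ξ =>
    ∑ m ∈ β.support, β m * Complex.exp (Complex.I * (m : ℂ) * ((polarAngle ξ : ℝ) : ℂ)) with hSdef
  set C : ℝ := ∑ m ∈ β.support, ‖β m‖ with hCdef
  set c : Fin 2 → E2 → ℂ := fun j ξ =>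
    ((-Complex.I) * S ξ * h ‖ξ‖) * eThetaC ξ j with hcdef
  -- basic facts
  have hCnn : 0 ≤ C := Finset.sum_nonneg fun m _ => norm_nonneg _
  have hSbd : ∀ ξ : E2, ‖S ξ‖ ≤ C := by
    intro ξ
    refine le_trans (norm_sum_le _ _) (Finset.sum_le_sum fun m _ => ?_)
    rw [norm_mul]
    have : Complex.I * (m : ℂ) * ((polarAngle ξ : ℝ) : ℂ)
        = (((m : ℝ) * polarAngle ξ : ℝ) : ℂ) * Complex.I := by push_cast; ring
    rw [this, Complex.norm_exp_ofReal_mul_I, mul_one]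
  have hpa : Measurable polarAngle := by
    apply Complex.measurable_arg.comp
    exact (Complex.measurable_ofReal.comp
        (EuclideanSpace.proj (0 : Fin 2)).continuous.measurable).add
      ((Complex.measurable_ofReal.comp
        (EuclideanSpace.proj (1 : Fin 2)).continuous.measurable).mul_const _)
  have hSmeas : Measurable S := by
    apply Finset.measurable_sum
    intro m _
    exact (Complex.measurable_exp.comp
      ((Complex.measurable_ofReal.comp hpa).const_mul _)).const_mul _
  have habs : ∀ (ξ : E2) (i : Fin 2), |ξ i| ≤ ‖ξ‖ := by
    intro ξ i
    have h1 := abs_real_inner_le_norm ξ (EuclideanSpace.single i (1 : ℝ))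
    simpa [EuclideanSpace.inner_single_right, EuclideanSpace.norm_single] using h1
  have habs' : ∀ (ξ : E2) (t : ℝ), |t| ≤ ‖ξ‖ → ‖((t / ‖ξ‖ : ℝ) : ℂ)‖ ≤ 1 := by
    intro ξ t ht
    rcases eq_or_ne ξ 0 with h0 | h0
    · simp [h0]
    · have hn : 0 < ‖ξ‖ := norm_pos_iff.2 h0
      rw [Complex.norm_real, Real.norm_eq_abs, abs_div, abs_norm, div_le_one hn]
      exact ht
  have heθbd : ∀ (ξ : E2) (j : Fin 2), ‖eThetaC ξ j‖ ≤ 1 := by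
    intro ξ j
    fin_cases j
    · exact habs' ξ _ (habs ξ 1)
    · exact habs' ξ _ (by rw [abs_neg]; exact habs ξ 0)
  have heθmeas : ∀ j : Fin 2, Measurable fun ξ : E2 => eThetaC ξ j := by
    intro j
    fin_cases j
    · exact (Complex.measurable_ofReal.comp
          ((EuclideanSpace.proj (1 : Fin 2)).continuous.measurable.div measurable_norm) :
        Measurable fun ξ : E2 => ((ξ 1 / ‖ξ‖ : ℝ) : ℂ))
    · exact (Complex.measurable_ofReal.comp
          (((EuclideanSpace.proj (0 : Fin 2)).continuous.measurable.neg).div measurable_norm) :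
        Measurable fun ξ : E2 => ((-ξ 0 / ‖ξ‖ : ℝ) : ℂ))
  have hcmeas : ∀ j : Fin 2, AEStronglyMeasurable (c j) volume := by
    intro j
    exact (((hSmeas.const_mul _).mul (hmeas.comp measurable_norm)).mul (heθmeas j)).aestronglyMeasurable
  have hcbd : ∀ (j : Fin 2) (ξ : E2), ‖c j ξ‖ ≤ C * ‖h ‖ξ‖‖ := by
    intro j ξ
    have : ‖c j ξ‖ = ‖S ξ‖ * ‖h ‖ξ‖‖ * ‖eThetaC ξ j‖ := by
      simp [hcdef, norm_mul]
    rw [this]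
    calc ‖S ξ‖ * ‖h ‖ξ‖‖ * ‖eThetaC ξ j‖ ≤ ‖S ξ‖ * ‖h ‖ξ‖‖ * 1 :=
          mul_le_mul_of_nonneg_left (heθbd ξ j) (by positivity)
      _ = ‖S ξ‖ * ‖h ‖ξ‖‖ := mul_one _
      _ ≤ C * ‖h ‖ξ‖‖ := mul_le_mul_of_nonneg_right (hSbd ξ) (norm_nonneg _)
  -- integrability
  have hIOn1 : IntegrableOn (fun r : ℝ => r * ‖h r‖) (Set.Ioi 0) := by
    refine hint.mono' ((measurable_id.mul hmeas.norm).aestronglyMeasurable.restrict) ?_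
    filter_upwards [self_mem_ae_restrict measurableSet_Ioi] with r hr
    have hr' : (0:ℝ) < r := hr
    rw [Real.norm_eq_abs, abs_of_nonneg (mul_nonneg hr'.le (norm_nonneg _))]
    nlinarith [norm_nonneg (h r), sq_nonneg r]
  have hIOn2 : IntegrableOn (fun r : ℝ => r * (|r| * ‖h r‖)) (Set.Ioi 0) := by
    refine hint.mono' ((measurable_id.mul (measurable_abs.mul hmeas.norm)).aestronglyMeasurable.restrict) ?_
    filter_upwards [self_mem_ae_restrict measurableSet_Ioi] with r hr
    have hr' : (0:ℝ) < r := hr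
    rw [Real.norm_eq_abs, abs_of_nonneg (by positivity), abs_of_nonneg hr'.le]
    nlinarith [norm_nonneg (h r)]
  have hH1 : Integrable fun ξ : E2 => ‖h ‖ξ‖‖ :=
    aux_integrable_norm _ hmeas.norm (fun r => norm_nonneg _) hIOn1
  have hH2 : Integrable fun ξ : E2 => ‖ξ‖ * ‖h ‖ξ‖‖ := by
    have := aux_integrable_norm (fun r => |r| * ‖h r‖) (measurable_abs.mul hmeas.norm)
      (fun r => mul_nonneg (abs_nonneg _) (norm_nonneg _)) hIOn2
    simpa [abs_norm] using this
  have hc1 : ∀ j : Fin 2, Integrable (c j) := fun j =>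
    (hH1.const_mul C).mono' (hcmeas j) (Filter.Eventually.of_forall (hcbd j))
  have hc2 : ∀ j : Fin 2, Integrable fun ξ : E2 => ‖ξ‖ * ‖c j ξ‖ := by
    intro j
    refine ((hH2.const_mul C).mono'
      (measurable_norm.aestronglyMeasurable.mul (hcmeas j).norm) ?_)
    refine Filter.Eventually.of_forall fun ξ => ?_
    rw [Real.norm_eq_abs, abs_of_nonneg (mul_nonneg (norm_nonneg _) (norm_nonneg _))]
    calc ‖ξ‖ * ‖c j ξ‖ ≤ ‖ξ‖ * (C * ‖h ‖ξ‖‖) :=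
          mul_le_mul_of_nonneg_left (hcbd j ξ) (norm_nonneg _)
      _ = C * (‖ξ‖ * ‖h ‖ξ‖‖) := by ring
  -- componentwise formula for ψ
  have hψj : ∀ (x : E2) (j : Fin 2), ψ x j
      = (2 * Real.pi)⁻¹ • ∫ ξ : E2, Complex.exp (Complex.I * ((⟪ξ, x⟫ : ℝ) : ℂ)) * c j ξ := by
    intro x j
    rw [hψ x, Pi.smul_apply]
    congr 1
    have hecont : Continuous fun ξ : E2 => Complex.exp (Complex.I * ((⟪ξ, x⟫ : ℝ) : ℂ)) :=
      Complex.continuous_exp.comp (continuous_const.mul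
        (Complex.continuous_ofReal.comp (continuous_id.inner continuous_const)))
    have hv : Integrable (fun ξ : E2 => Complex.exp (Complex.I * ((⟪ξ, x⟫ : ℝ) : ℂ)) •
        ((((-Complex.I) * S ξ * h ‖ξ‖)) • eThetaC ξ)) volume := by
      refine (hH1.const_mul C).mono' ?_ (Filter.Eventually.of_forall fun ξ => ?_)
      · refine hecont.aestronglyMeasurable.smul ?_
        refine AEStronglyMeasurable.smul
          (((hSmeas.const_mul _).mul (hmeas.comp measurable_norm)).aestronglyMeasurable) ?_
        exact (measurable_pi_iff.2 fun j => heθmeas j).aestronglyMeasurable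
      · rw [norm_smul, norm_smul]
        have he1 : ‖Complex.exp (Complex.I * ((⟪ξ, x⟫ : ℝ) : ℂ))‖ = 1 := by
          rw [mul_comm]; exact Complex.norm_exp_ofReal_mul_I _
        rw [he1, one_mul]
        have hw : ‖eThetaC ξ‖ ≤ 1 := pi_norm_le_iff_of_nonneg zero_le_one |>.2 (heθbd ξ)
        have hs : ‖(-Complex.I) * S ξ * h ‖ξ‖‖ ≤ C * ‖h ‖ξ‖‖ := by
          rw [norm_mul, norm_mul, norm_neg, Complex.norm_I, one_mul]
          exact mul_le_mul_of_nonneg_right (hSbd ξ) (norm_nonneg _)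
        calc ‖(-Complex.I) * S ξ * h ‖ξ‖‖ * ‖eThetaC ξ‖
            ≤ (C * ‖h ‖ξ‖‖) * 1 := mul_le_mul hs hw (norm_nonneg _) (by positivity)
          _ = C * ‖h ‖ξ‖‖ := mul_one _
    have hproj := (ContinuousLinearMap.proj (R := ℝ) (φ := fun _ : Fin 2 => ℂ) j).integral_comp_comm hv
    calc (∫ ξ : E2, Complex.exp (Complex.I * ((⟪ξ, x⟫ : ℝ) : ℂ)) •
            ((((-Complex.I) * S ξ * h ‖ξ‖)) • eThetaC ξ)) j
        = ∫ ξ : E2, (Complex.exp (Complex.I * ((⟪ξ, x⟫ : ℝ) : ℂ)) •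
            ((((-Complex.I) * S ξ * h ‖ξ‖)) • eThetaC ξ)) j := hproj.symm
      _ = ∫ ξ : E2, Complex.exp (Complex.I * ((⟪ξ, x⟫ : ℝ) : ℂ)) * c j ξ := by
          refine integral_congr_ae (Filter.Eventually.of_forall fun ξ => ?_)
          simp [hcdef, smul_eq_mul, mul_assoc]
  have hkey := fun j : Fin 2 => aux_key (c j) (hcmeas j) (hc1 j) (hc2 j)
  have hψfun : ∀ j : Fin 2, (fun x => ψ x j)
      = fun x : E2 => (2 * Real.pi)⁻¹ •
          ∫ ξ : E2, Complex.exp (Complex.I * ((⟪ξ, x⟫ : ℝ) : ℂ)) * c j ξ :=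
    fun j => funext fun x => hψj x j
  have hCD : ∀ j : Fin 2, ContDiff ℝ 1 fun x => ψ x j := by
    intro j
    rw [hψfun j]
    exact (hkey j).1.const_smul _
  refine ⟨hCD 0, hCD 1, ?_⟩
  intro x
  have hval : ∀ (j : Fin 2) (v : E2), fderiv ℝ (fun y => ψ y j) x v
      = (2 * Real.pi)⁻¹ • ∫ ξ : E2,
          Complex.I * ((⟪ξ, v⟫ : ℝ) : ℂ) * Complex.exp (Complex.I * ((⟪ξ, x⟫ : ℝ) : ℂ)) * c j ξ := by
    intro j v
    rw [hψfun j, fderiv_fun_const_smul (((hkey j).1.differentiable one_ne_zero).differentiableAt) _]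
    rw [ContinuousLinearMap.smul_apply, (hkey j).2 x v]
  rw [hval 1 (EuclideanSpace.single 0 1), hval 0 (EuclideanSpace.single 1 1)]
  have hInt : ∀ (j : Fin 2) (v : E2), ‖v‖ ≤ 1 → Integrable (fun ξ : E2 =>
      Complex.I * ((⟪ξ, v⟫ : ℝ) : ℂ) * Complex.exp (Complex.I * ((⟪ξ, x⟫ : ℝ) : ℂ)) * c j ξ) := by
    intro j v hv
    refine (hc2 j).mono' ?_ (Filter.Eventually.of_forall fun ξ => ?_)
    · refine Continuous.aestronglyMeasurable ?_ |>.mul (hcmeas j)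
      exact (continuous_const.mul (Complex.continuous_ofReal.comp
        (continuous_id.inner continuous_const))).mul
        (Complex.continuous_exp.comp (continuous_const.mul
          (Complex.continuous_ofReal.comp (continuous_id.inner continuous_const))))
    · have he1 : ‖Complex.exp (Complex.I * ((⟪ξ, x⟫ : ℝ) : ℂ))‖ = 1 := by
        rw [mul_comm]; exact Complex.norm_exp_ofReal_mul_I _
      rw [norm_mul, norm_mul, norm_mul, Complex.norm_I, one_mul, he1, mul_one,
        Complex.norm_real, Real.norm_eq_abs]
      refine mul_le_mul_of_nonneg_right ?_ (norm_nonneg _)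
      calc |⟪ξ, v⟫| ≤ ‖ξ‖ * ‖v‖ := abs_real_inner_le_norm ξ v
        _ ≤ ‖ξ‖ * 1 := mul_le_mul_of_nonneg_left hv (norm_nonneg _)
        _ = ‖ξ‖ := mul_one _
  have hnorm1 : ‖(EuclideanSpace.single (0 : Fin 2) (1:ℝ) : E2)‖ ≤ 1 := by
    rw [EuclideanSpace.norm_single]; simp
  have hnorm2 : ‖(EuclideanSpace.single (1 : Fin 2) (1:ℝ) : E2)‖ ≤ 1 := by
    rw [EuclideanSpace.norm_single]; simp
  rw [← smul_sub, ← integral_sub (hInt 1 _ hnorm1) (hInt 0 _ hnorm2)]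
  have hpt : ∀ ξ : E2,
      Complex.I * ((⟪ξ, (EuclideanSpace.single (0:Fin 2) (1:ℝ) : E2)⟫ : ℝ) : ℂ) *
          Complex.exp (Complex.I * ((⟪ξ, x⟫ : ℝ) : ℂ)) * c 1 ξ -
        Complex.I * ((⟪ξ, (EuclideanSpace.single (1:Fin 2) (1:ℝ) : E2)⟫ : ℝ) : ℂ) *
          Complex.exp (Complex.I * ((⟪ξ, x⟫ : ℝ) : ℂ)) * c 0 ξ
      = -(((‖ξ‖ : ℝ) : ℂ) * S ξ * h ‖ξ‖ * Complex.exp (Complex.I * ((⟪ξ, x⟫ : ℝ) : ℂ))) := by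
    intro ξ
    have hi0 : (⟪ξ, (EuclideanSpace.single (0:Fin 2) (1:ℝ) : E2)⟫ : ℝ) = ξ 0 := by
      simp [EuclideanSpace.inner_single_right]
    have hi1 : (⟪ξ, (EuclideanSpace.single (1:Fin 2) (1:ℝ) : E2)⟫ : ℝ) = ξ 1 := by
      simp [EuclideanSpace.inner_single_right]
    rw [hi0, hi1]
    have hc0' : c 0 ξ = ((-Complex.I) * S ξ * h ‖ξ‖) * ((ξ 1 / ‖ξ‖ : ℝ) : ℂ) := by
      simp [hcdef, eThetaC]
    have hc1' : c 1 ξ = ((-Complex.I) * S ξ * h ‖ξ‖) * ((-ξ 0 / ‖ξ‖ : ℝ) : ℂ) := by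
      simp [hcdef, eThetaC]
    rw [hc0', hc1']
    set e := Complex.exp (Complex.I * ((⟪ξ, x⟫ : ℝ) : ℂ)) with he
    rcases eq_or_ne ξ 0 with h0 | h0
    · subst h0
      simp
    · have hn : ‖ξ‖ ≠ 0 := norm_ne_zero_iff.2 h0
      have hsq : (ξ 0) ^ 2 + (ξ 1) ^ 2 = ‖ξ‖ ^ 2 := by
        rw [EuclideanSpace.norm_eq, Real.sq_sqrt (by positivity)]
        simp [Fin.sum_univ_two, Real.norm_eq_abs, sq_abs]
      have hsqC : ((ξ 0 : ℝ) : ℂ) ^ 2 + ((ξ 1 : ℝ) : ℂ) ^ 2 = ((‖ξ‖ : ℝ) : ℂ) ^ 2 := by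
        exact_mod_cast congrArg (Complex.ofReal) hsq
      have hnC : ((‖ξ‖ : ℝ) : ℂ) ≠ 0 := Complex.ofReal_ne_zero.2 hn
      rw [Complex.ofReal_div, Complex.ofReal_div, Complex.ofReal_neg]
      field_simp
      linear_combination (-(S ξ * h ‖ξ‖ * e)) * hsqC +
        (((ξ 0 : ℝ) : ℂ) ^ 2 + ((ξ 1 : ℝ) : ℂ) ^ 2) * e * S ξ * h ‖ξ‖ * Complex.I_sq
  rw [integral_congr_ae (Filter.Eventually.of_forall hpt), integral_neg, smul_neg]
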